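/- Let α : 𝔽₂ⁿ → 𝔽₂ be a cubic form and A ⊆ 𝔽₂ⁿ a nonempty subset such that α(x + x') = 1 for all distinct x, x' ∈ A. Then, writing r = |A| and N = 2ⁿ, there exists a bilinear map c : ℝʳ × ℝᴺ → ℝᴺ such that ‖c(a,b)‖² = ‖a‖² · ‖b‖² for all a ∈ ℝʳ and b ∈ ℝᴺ, where ‖·‖ denotes the Euclidean norm. (Existence of a sum-of-squares identity of size [|A|, 2ⁿ, 2ⁿ].) -/

import Mathlib

lemma zmod2_key : ∀ m p q r p' q' r' s t v : ZMod 2,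
    m*(p*q*v + p*r*t + q*r*s) + m*(p'*q'*v + p'*r'*t + q'*r'*s)
    + m*(p*q*(v+(r+r')) + p*r*(t+(q+q')) + q*r*(s+(p+p')))
    + m*(p'*q'*(v+(r+r')) + p'*r'*(t+(q+q')) + q'*r'*(s+(p+p')))
    = m*((p+p')*(q+q')*(r+r')) := by decide

lemma zmod2_aux1 : ∀ a b c : ZMod 2, a + ((a + b) + c) = b + c := by decide
lemma zmod2_aux2 : ∀ a b c : ZMod 2, b + ((a + b) + c) = a + c := by decide
lemma zmod2_aux3 : ∀ a b c d e : ZMod 2, a + b + c + d = e → c + d = e + (a + b) := by decide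

noncomputable def sgn (z : ZMod 2) : ℝ := if z = 1 then -1 else 1

lemma sgn_mul_self (z : ZMod 2) : sgn z * sgn z = 1 := by
  unfold sgn; split <;> norm_num

lemma sgn_add (z z' : ZMod 2) : sgn (z + z') = sgn z * sgn z' := by
  have key : ∀ z z' : ZMod 2, (z + z' = 1 ↔ ¬(z = 1 ↔ z' = 1)) := by decide
  have := key z z'
  unfold sgn; split_ifs <;> simp_all <;> norm_num

lemma sgn_one : sgn 1 = -1 := by simp [sgn]

def qform {n : ℕ} (cc : Fin n → Fin n → Fin n → ZMod 2) (x y : Fin n → ZMod 2) : ZMod 2 :=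
  ∑ i, ∑ j, ∑ k, if i ≤ j ∧ j ≤ k then
    cc i j k * (x i * x j * y k + x i * x k * y j + x j * x k * y i) else 0

lemma qform_key {n : ℕ} (cc : Fin n → Fin n → Fin n → ZMod 2) (x x' w : Fin n → ZMod 2) :
    qform cc x w + qform cc x' w
      + qform cc x (w + (x + x')) + qform cc x' (w + (x + x'))
    = ∑ i, ∑ j, ∑ k, if i ≤ j ∧ j ≤ k then
        cc i j k * (x + x') i * (x + x') j * (x + x') k else 0 := by
  unfold qform
  simp only [← Finset.sum_add_distrib]
  refine Finset.sum_congr rfl fun i _ => ?_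
  refine Finset.sum_congr rfl fun j _ => ?_
  refine Finset.sum_congr rfl fun k _ => ?_
  split_ifs
  · simp only [Pi.add_apply]
    have := zmod2_key (cc i j k) (x i) (x j) (x k) (x' i) (x' j) (x' k) (w i) (w j) (w k)
    rw [this]; ring
  · simp

def IsCubicForm {n : ℕ} (α : (Fin n → ZMod 2) → ZMod 2) : Prop :=
  ∃ c : Fin n → Fin n → Fin n → ZMod 2,
    ∀ x, α x = ∑ i, ∑ j, ∑ k, if i ≤ j ∧ j ≤ k then c i j k * x i * x j * x k else 0

theorem exists_square_identity_of_cubicForm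
    (n : ℕ) (α : (Fin n → ZMod 2) → ZMod 2) (hα : IsCubicForm α)
    (A : Finset (Fin n → ZMod 2)) (hA : A.Nonempty)
    (h : ∀ x ∈ A, ∀ x' ∈ A, x ≠ x' → α (x + x') = 1) :
    ∃ c : (Fin A.card → ℝ) →ₗ[ℝ] (Fin (2 ^ n) → ℝ) →ₗ[ℝ] (Fin (2 ^ n) → ℝ),
      ∀ (a : Fin A.card → ℝ) (b : Fin (2 ^ n) → ℝ),
        ∑ k, (c a b k) ^ 2 = (∑ i, (a i) ^ 2) * (∑ j, (b j) ^ 2) := by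
  obtain ⟨cc, hcc⟩ := hα
  have hNcard : Fintype.card (Fin n → ZMod 2) = 2 ^ n := by simp [Fintype.card_fun]
  set eN : Fin (2 ^ n) ≃ (Fin n → ZMod 2) := (Fintype.equivFinOfCardEq hNcard).symm with heN
  set eA : Fin A.card ≃ {x // x ∈ A} := A.equivFin.symm with heA
  set X : Fin A.card → (Fin n → ZMod 2) := fun i => (eA i : Fin n → ZMod 2) with hX
  have hXA : ∀ i, X i ∈ A := fun i => (eA i).2
  have hXinj : Function.Injective X := fun i j hij => eA.injective (Subtype.ext hij)
  -- the key q identity for distinct elements of A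
  have hq : ∀ i j : Fin A.card, i ≠ j → ∀ y : Fin n → ZMod 2,
      qform cc (X i) (y + (X i + X j)) + qform cc (X j) (y + (X i + X j))
        = 1 + (qform cc (X i) y + qform cc (X j) y) := by
    intro i j hij y
    have hXne : X i ≠ X j := fun hc => hij (hXinj hc)
    have hkey := qform_key cc (X i) (X j) y
    have halpha : α (X i + X j) = 1 := h _ (hXA i) _ (hXA j) hXne
    rw [← hcc (X i + X j), halpha] at hkey
    exact zmod2_aux3 _ _ _ _ _ hkey
  refine ⟨LinearMap.mk₂ ℝ
    (fun a b k => ∑ i, a i * (sgn (qform cc (X i) (eN k)) * b (eN.symm (X i + eN k))))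
    ?_ ?_ ?_ ?_, ?_⟩
  · intro a a' b; funext k
    simp [add_mul, Finset.sum_add_distrib]
  · intro c a b; funext k
    simp only [Pi.smul_apply, smul_eq_mul, Finset.mul_sum]
    exact Finset.sum_congr rfl fun i _ => by ring
  · intro a b b'; funext k
    simp only [Pi.add_apply, mul_add, Finset.sum_add_distrib]
  · intro c a b; funext k
    simp only [Pi.smul_apply, smul_eq_mul, Finset.mul_sum]
    exact Finset.sum_congr rfl fun i _ => by ring
  · intro a b
    simp only [LinearMap.mk₂_apply]
    set F : (Fin n → ZMod 2) → (Fin n → ZMod 2) → ℝ :=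
      fun x y => sgn (qform cc x y) * b (eN.symm (x + y)) with hF
    set S : Fin A.card → Fin A.card → ℝ :=
      fun i j => ∑ y : Fin n → ZMod 2, F (X i) y * F (X j) y with hS
    have hSdiag : ∀ i, S i i = ∑ jj, b jj ^ 2 := by
      intro i
      have h1 : ∀ y, F (X i) y * F (X i) y = b (eN.symm (X i + y)) ^ 2 := by
        intro y
        have := sgn_mul_self (qform cc (X i) y)
        simp only [hF]; nlinarith [this]
      calc S i i = ∑ y : Fin n → ZMod 2, b (eN.symm (X i + y)) ^ 2 :=
            Finset.sum_congr rfl fun y _ => h1 y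
        _ = ∑ y : Fin n → ZMod 2, b (eN.symm y) ^ 2 :=
            Equiv.sum_comp (Equiv.addLeft (X i)) (fun y => b (eN.symm y) ^ 2)
        _ = ∑ jj, b jj ^ 2 := Equiv.sum_comp eN.symm (fun jj => b jj ^ 2)
    have hSoff : ∀ i j, i ≠ j → S i j = 0 := by
      intro i j hij
      set u : Fin n → ZMod 2 := X i + X j with hu
      have hflip : ∀ y, F (X i) (u + y) * F (X j) (u + y) = -(F (X i) y * F (X j) y) := by
        intro y
        have e1 : X i + (u + y) = X j + y := by
          funext t; simp only [hu, Pi.add_apply]; exact zmod2_aux1 _ _ _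
        have e2 : X j + (u + y) = X i + y := by
          funext t; simp only [hu, Pi.add_apply]; exact zmod2_aux2 _ _ _
        have hsg : sgn (qform cc (X i) (u + y)) * sgn (qform cc (X j) (u + y))
            = -(sgn (qform cc (X i) y) * sgn (qform cc (X j) y)) := by
          rw [← sgn_add]
          rw [add_comm u y, hq i j hij y]
          rw [sgn_add, sgn_add, sgn_one]; ring
        simp only [hF, e1, e2]
        linear_combination (b (eN.symm (X j + y)) * b (eN.symm (X i + y))) * hsg
      have : S i j = -(S i j) := by
        calc S i j = ∑ y : Fin n → ZMod 2, F (X i) (u + y) * F (X j) (u + y) :=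
              (Equiv.sum_comp (Equiv.addLeft u) (fun y => F (X i) y * F (X j) y)).symm
          _ = ∑ y : Fin n → ZMod 2, -(F (X i) y * F (X j) y) :=
              Finset.sum_congr rfl fun y _ => hflip y
          _ = -(S i j) := by rw [Finset.sum_neg_distrib]
      linarith
    calc ∑ k, (∑ i, a i * (sgn (qform cc (X i) (eN k)) * b (eN.symm (X i + eN k)))) ^ 2
        = ∑ k, ∑ i, ∑ j, (a i * a j) * (F (X i) (eN k) * F (X j) (eN k)) := by
          refine Finset.sum_congr rfl fun k _ => ?_
          rw [sq, Finset.sum_mul_sum]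
          exact Finset.sum_congr rfl fun i _ => Finset.sum_congr rfl fun j _ => by
            simp only [hF]; ring
      _ = ∑ i, ∑ j, (a i * a j) * ∑ k, F (X i) (eN k) * F (X j) (eN k) := by
          rw [Finset.sum_comm]
          refine Finset.sum_congr rfl fun i _ => ?_
          rw [Finset.sum_comm]
          exact Finset.sum_congr rfl fun j _ => (Finset.mul_sum _ _ _).symm
      _ = ∑ i, ∑ j, (a i * a j) * S i j := by
          refine Finset.sum_congr rfl fun i _ => Finset.sum_congr rfl fun j _ => ?_
          rw [hS]; congr 1
          exact Equiv.sum_comp eN (fun y => F (X i) y * F (X j) y)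
      _ = ∑ i, (a i * a i) * S i i := by
          refine Finset.sum_congr rfl fun i _ => ?_
          refine Finset.sum_eq_single i (fun j _ hji => ?_) (by simp)
          rw [hSoff i j (Ne.symm hji), mul_zero]
      _ = (∑ i, a i ^ 2) * (∑ j, b j ^ 2) := by
          rw [Finset.sum_mul]
          exact Finset.sum_congr rfl fun i _ => by rw [hSdiag i, sq]
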